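/- For every q ∈ Δ₄, ½[√((q₁ − q₄)² + (q₂ − q₃)²) − (q₁ + q₄)] ≤ ½, with equality if and only if q = (0,1,0,0) or q = (0,0,1,0). Hence the maximal negativity achievable over the probability simplex is 1/2, attained exactly at the population vectors corresponding to Bell states. -/

import Mathlib

open Finset

/-- The probability simplex Δ₄ ⊂ ℝ⁴. -/
def inSimplex (p : Fin 4 → ℝ) : Prop := (∀ i, 0 ≤ p i) ∧ ∑ i, p i = 1

/-- for every q ∈ Δ₄, the (optimally rotated) negativity
½[√((q₁−q₄)² + (q₂−q₃)²) − (q₁+q₄)] is at most ½, with equality iff q = (0,1,0,0)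
or q = (0,0,1,0): the maximal negativity is 1/2, attained exactly at Bell states. -/
theorem max_negativity_bell (q : Fin 4 → ℝ) (hq : inSimplex q) :
    (Real.sqrt ((q 0 - q 3) ^ 2 + (q 1 - q 2) ^ 2) - (q 0 + q 3)) / 2 ≤ 1 / 2 ∧
    ((Real.sqrt ((q 0 - q 3) ^ 2 + (q 1 - q 2) ^ 2) - (q 0 + q 3)) / 2 = 1 / 2 ↔
      q = ![0, 1, 0, 0] ∨ q = ![0, 0, 1, 0]) := by
  obtain ⟨hpos, hsum⟩ := hq
  rw [Fin.sum_univ_four] at hsum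
  have h0 := hpos 0; have h1 := hpos 1; have h2 := hpos 2; have h3 := hpos 3
  have hs : Real.sqrt ((q 0 - q 3) ^ 2 + (q 1 - q 2) ^ 2) ≤ 1 + (q 0 + q 3) := by
    rw [show (1:ℝ) + (q 0 + q 3) = Real.sqrt ((1 + (q 0 + q 3)) ^ 2) from
      (Real.sqrt_sq (by linarith)).symm]
    apply Real.sqrt_le_sqrt
    nlinarith [sq_nonneg (q 1 - q 2), sq_nonneg (q 0 + q 3), mul_nonneg h1 h2,
      mul_nonneg (add_nonneg h0 h3) (by linarith : (0:ℝ) ≤ q 1 + q 2)]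
  refine ⟨by linarith, ?_, ?_⟩
  · intro h
    have hs' : Real.sqrt ((q 0 - q 3) ^ 2 + (q 1 - q 2) ^ 2) = 1 + (q 0 + q 3) := by
      linarith
    have hsq : (q 0 - q 3) ^ 2 + (q 1 - q 2) ^ 2 = (1 + (q 0 + q 3)) ^ 2 := by
      have h' := Real.sq_sqrt (by positivity : (0:ℝ) ≤ (q 0 - q 3) ^ 2 + (q 1 - q 2) ^ 2)
      rw [hs'] at h'
      linarith [h']
    have had : q 0 + q 3 = 0 := by
      nlinarith [mul_nonneg h1 h2, mul_nonneg (add_nonneg h0 h3)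
        (by linarith : (0:ℝ) ≤ q 1 + q 2), mul_nonneg h0 h3]
    have ha : q 0 = 0 := by linarith
    have hd : q 3 = 0 := by linarith
    have hbc : q 1 * q 2 = 0 := by nlinarith
    rcases mul_eq_zero.mp hbc with hb | hc
    · right
      funext i; fin_cases i <;> simp <;> linarith
    · left
      funext i; fin_cases i <;> simp <;> linarith
  · rintro (h | h) <;> subst h <;>
      norm_num [Matrix.cons_val_zero, Matrix.cons_val_one, Matrix.cons_val_two, Matrix.cons_val_three, Real.sqrt_one]
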